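/- A play ρ⁰ ∈ Plays_X(x₀) is the outcome of a subgame perfect equilibrium in the initialized extended game (X, x₀) if and only if ρ⁰ is λ*-consistent, i.e., ρ⁰ ∈ Λ*(x₀), where λ* is the fixpoint of the labeling iteration. -/

import Mathlib

open scoped Classical

namespace SPE

variable {V : Type*} {P : Type*}

/-- Vertices of the extended game: a base vertex together with the set of players
having already visited their target set. -/
abbrev XV (V P : Type*) := V × Set P

/-- Edges of the extended game induced by base edges `E` and target sets `F`. -/
def XEdge (E : V → V → Prop) (F : P → Set V) (a b : XV V P) : Prop :=
  E a.1 b.1 ∧ b.2 = a.2 ∪ {i | b.1 ∈ F i}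

/-- Plays of the extended game starting at `x`. -/
def IsPlay (E : V → V → Prop) (F : P → Set V) (x : XV V P) (ρ : ℕ → XV V P) : Prop :=
  ρ 0 = x ∧ ∀ k, XEdge E F (ρ k) (ρ (k + 1))

/-- Cost of player `i` along the suffix `ρ_{≥ n}`: the least `k` such that `i` belongs to
the second component of `ρ (n + k)`, and `⊤` if there is no such `k`. -/
noncomputable def costFrom (ρ : ℕ → XV V P) (n : ℕ) (i : P) : ℕ∞ :=
  sInf ((fun k : ℕ => (k : ℕ∞)) '' {k | i ∈ (ρ (n + k)).2})

/-- Cost of player `i` along the play `ρ` of the extended game. -/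
noncomputable def cost (ρ : ℕ → XV V P) (i : P) : ℕ∞ := costFrom ρ 0 i

/-- `λ`-consistency of a play. -/
def Consistent (own : V → P) (lam : XV V P → ℕ∞) (ρ : ℕ → XV V P) : Prop :=
  ∀ n, costFrom ρ n (own (ρ n).1) ≤ lam (ρ n)

/-- The set `Λ(x)` of `λ`-consistent plays from `x`. -/
def Lam (E : V → V → Prop) (F : P → Set V) (own : V → P) (lam : XV V P → ℕ∞)
    (x : XV V P) : Set (ℕ → XV V P) :=
  {ρ | IsPlay E F x ρ ∧ Consistent own lam ρ}

/-- The initial labeling `λ⁰`. -/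
noncomputable def lam0 (own : V → P) : XV V P → ℕ∞ :=
  fun v => if own v.1 ∈ v.2 then 0 else ⊤

/-- The labeling update operator. -/
noncomputable def update (E : V → V → Prop) (F : P → Set V) (own : V → P)
    (lam : XV V P → ℕ∞) (v : XV V P) : ℕ∞ :=
  if own v.1 ∈ v.2 then 0
  else ⨅ w ∈ {w : XV V P | XEdge E F v w},
    (1 + sSup ((fun ρ => cost ρ (own v.1)) '' Lam E F own lam w))

/-- Prepend a finite list in front of an infinite sequence. -/
def listAppendSeq {α : Type*} (h : List α) (ρ : ℕ → α) : ℕ → α :=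
  fun k => if hk : k < h.length then h.get ⟨k, hk⟩ else ρ (k - h.length)

/-- Validity of a strategy profile in the extended game: the prescribed moves follow edges. -/
def StratValid (E : V → V → Prop) (F : P → Set V)
    (σ : List (XV V P) → XV V P → XV V P) : Prop :=
  ∀ h v, XEdge E F v (σ h v)

/-- The outcome of a strategy profile after history `h` from vertex `v`. -/
def outcome (σ : List (XV V P) → XV V P → XV V P) :
    List (XV V P) → XV V P → ℕ → XV V P
  | _, v, 0 => v
  | h, v, n + 1 => outcome σ (h ++ [v]) (σ h v) n

/-- `h·v` is a history of the initialized extended game `(X, x0)`. -/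
def IsHistoryFrom (E : V → V → Prop) (F : P → Set V) (x0 : XV V P)
    (h : List (XV V P)) (v : XV V P) : Prop :=
  (h ++ [v]).head? = some x0 ∧ (h ++ [v]).Chain' (XEdge E F)

/-- Cost of player `i` of the play `h·ρ` (cost in the subgame after `h`). -/
noncomputable def costAfter (h : List (XV V P)) (ρ : ℕ → XV V P) (i : P) : ℕ∞ :=
  sInf ((fun k : ℕ => (k : ℕ∞)) '' {k | i ∈ (listAppendSeq h ρ k).2})

/-- `τ` is a unilateral deviation of player `i` from the profile `σ`. -/
def Deviation (own : V → P) (σ τ : List (XV V P) → XV V P → XV V P) (i : P) : Prop :=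
  ∀ h v, own v.1 ≠ i → τ h v = σ h v

/-- Subgame perfect equilibrium of the initialized extended game. -/
def IsSPE (E : V → V → Prop) (F : P → Set V) (own : V → P) (x0 : XV V P)
    (σ : List (XV V P) → XV V P → XV V P) : Prop :=
  StratValid E F σ ∧
  ∀ h v, IsHistoryFrom E F x0 h v → ∀ (i : P) τ, StratValid E F τ →
    Deviation own σ τ i →
    costAfter h (outcome σ h v) i ≤ costAfter h (outcome τ h v) i

/-! ### Auxiliary: ℕ∞ facts -/

lemma aux_enat_sInf_mem {s : Set ℕ∞} (hs : s.Nonempty) : sInf s ∈ s := by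
  by_cases hT : ∃ n : ℕ, (n : ℕ∞) ∈ s
  · have hTne : {n : ℕ | (n : ℕ∞) ∈ s}.Nonempty := hT
    have hmem : ((sInf {n : ℕ | (n : ℕ∞) ∈ s} : ℕ) : ℕ∞) ∈ s := Nat.sInf_mem hTne
    have heq : sInf s = ((sInf {n : ℕ | (n : ℕ∞) ∈ s} : ℕ) : ℕ∞) := by
      refine le_antisymm (sInf_le hmem) (le_sInf ?_)
      intro b hb
      induction b using ENat.recTopCoe with
      | top => exact le_top
      | coe m => exact Nat.cast_le.mpr (Nat.sInf_le hb)
    rw [heq]; exact hmem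
  · push_neg at hT
    obtain ⟨a, ha⟩ := hs
    have hatop : a = ⊤ := by
      induction a using ENat.recTopCoe with
      | top => rfl
      | coe m => exact absurd ha (hT m)
    have heq : sInf s = ⊤ := sInf_eq_top.mpr (fun b hb => by
      induction b using ENat.recTopCoe with
      | top => rfl
      | coe m => exact absurd hb (hT m))
    rw [heq, ← hatop]; exact ha

lemma aux_enat_add_sInf (c : ℕ∞) (s : Set ℕ∞) :
    c + sInf s = sInf ((fun x => c + x) '' s) := by
  rcases s.eq_empty_or_nonempty with rfl | hs
  · simp
  · refine le_antisymm (le_sInf ?_) (sInf_le ⟨sInf s, aux_enat_sInf_mem hs, rfl⟩)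
    rintro b ⟨a, ha, rfl⟩
    exact add_le_add_right (sInf_le ha) c

lemma aux_enat_add_le_left {n a b : ℕ∞} (hn : n ≠ ⊤) : n + a ≤ n + b ↔ a ≤ b := by
  constructor
  · intro h
    induction b using ENat.recTopCoe with
    | top => exact le_top
    | coe m =>
      induction a using ENat.recTopCoe with
      | top =>
        rw [add_top, top_le_iff, ENat.add_eq_top] at h
        rcases h with h | h
        · exact absurd h hn
        · exact absurd h (ENat.coe_ne_top m)
      | coe k =>
        induction n using ENat.recTopCoe with
        | top => exact absurd rfl hn
        | coe j =>
          rw [← Nat.cast_add, ← Nat.cast_add, Nat.cast_le] at h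
          exact Nat.cast_le.mpr (by omega)
  · intro h; exact add_le_add_right h n

lemma aux_enat_exists_coe {a : ℕ∞} (ha : a ≠ ⊤) : ∃ n : ℕ, a = n := by
  induction a using ENat.recTopCoe with
  | top => exact absurd rfl ha
  | coe n => exact ⟨n, rfl⟩

/-! ### Auxiliary: costFrom facts -/

lemma costFrom_le_of_mem {ρ : ℕ → XV V P} {n k : ℕ} {i : P} (h : i ∈ (ρ (n + k)).2) :
    costFrom ρ n i ≤ (k : ℕ∞) :=
  sInf_le ⟨k, h, rfl⟩

lemma cost_le_of_mem {ρ : ℕ → XV V P} {k : ℕ} {i : P} (h : i ∈ (ρ k).2) :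
    cost ρ i ≤ (k : ℕ∞) :=
  costFrom_le_of_mem (n := 0) (by simpa using h)

lemma costFrom_le_coe_iff {ρ : ℕ → XV V P} {n c : ℕ} {i : P} :
    costFrom ρ n i ≤ (c : ℕ∞) ↔ ∃ k, k ≤ c ∧ i ∈ (ρ (n + k)).2 := by
  constructor
  · intro h
    by_contra hc
    push_neg at hc
    have hge : ((c + 1 : ℕ) : ℕ∞) ≤ costFrom ρ n i := by
      apply le_sInf
      rintro b ⟨k, hk, rfl⟩
      have : ¬ k ≤ c := fun hkc => hc k hkc hk
      exact Nat.cast_le.mpr (by omega)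
    have := hge.trans h
    rw [Nat.cast_le] at this
    omega
  · rintro ⟨k, hk, h⟩
    exact (costFrom_le_of_mem h).trans (Nat.cast_le.mpr hk)

lemma costFrom_eq_top_iff {ρ : ℕ → XV V P} {n : ℕ} {i : P} :
    costFrom ρ n i = ⊤ ↔ ∀ k, i ∉ (ρ (n + k)).2 := by
  constructor
  · intro h k hk
    have h1 := costFrom_le_of_mem hk
    rw [h, top_le_iff] at h1
    exact ENat.coe_ne_top k h1
  · intro h
    have hset : {k : ℕ | i ∈ (ρ (n + k)).2} = ∅ := by
      ext k; simp [h k]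
    rw [costFrom, hset]
    simp

lemma costFrom_attain {ρ : ℕ → XV V P} {n : ℕ} {i : P} (h : costFrom ρ n i ≠ ⊤) :
    ∃ c : ℕ, costFrom ρ n i = (c : ℕ∞) ∧ i ∈ (ρ (n + c)).2 := by
  have hne : ((fun k : ℕ => (k : ℕ∞)) '' {k | i ∈ (ρ (n + k)).2}).Nonempty := by
    by_contra hh
    rw [Set.not_nonempty_iff_eq_empty] at hh
    exact h (by rw [costFrom, hh]; simp)
  obtain ⟨k, hk, hco⟩ := aux_enat_sInf_mem hne
  exact ⟨k, by rw [costFrom]; exact hco.symm, hk⟩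

lemma costFrom_eq_zero {ρ : ℕ → XV V P} {n : ℕ} {i : P} (h : i ∈ (ρ n).2) :
    costFrom ρ n i = 0 := by
  refine le_antisymm ?_ zero_le
  have h0 : i ∈ (ρ (n + 0)).2 := by simpa using h
  simpa using costFrom_le_of_mem h0

lemma costFrom_succ {ρ : ℕ → XV V P} {n : ℕ} {i : P} (h : i ∉ (ρ n).2) :
    costFrom ρ n i = 1 + costFrom ρ (n + 1) i := by
  have hset : ((fun k : ℕ => (k : ℕ∞)) '' {k | i ∈ (ρ (n + k)).2})
      = (fun x => 1 + x) '' ((fun k : ℕ => (k : ℕ∞)) '' {k | i ∈ (ρ (n + 1 + k)).2}) := by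
    ext b
    constructor
    · rintro ⟨k, hk, rfl⟩
      match k with
      | 0 => exact absurd (by simpa using hk) h
      | (k' + 1) =>
        refine ⟨k', ⟨k', ?_, rfl⟩, ?_⟩
        · have he : n + 1 + k' = n + (k' + 1) := by omega
          rw [Set.mem_setOf_eq, he]
          exact hk
        · push_cast; ring
    · rintro ⟨_, ⟨k', hk', rfl⟩, rfl⟩
      refine ⟨k' + 1, ?_, by push_cast; ring⟩
      have he : n + (k' + 1) = n + 1 + k' := by omega
      rw [Set.mem_setOf_eq, he]
      exact hk'
  rw [costFrom, hset, ← aux_enat_add_sInf]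
  rfl

lemma costFrom_shift {ρ : ℕ → XV V P} {n : ℕ} {i : P} :
    costFrom ρ n i = cost (fun k => ρ (n + k)) i := by
  simp [cost, costFrom, Nat.zero_add]

lemma cost_def' {ρ : ℕ → XV V P} {i : P} :
    cost ρ i = sInf ((fun k : ℕ => (k : ℕ∞)) '' {k | i ∈ (ρ k).2}) := by
  simp [cost, costFrom, Nat.zero_add]

lemma costFrom_tri {ρ : ℕ → XV V P} {n k : ℕ} {i : P} :
    costFrom ρ n i ≤ (k : ℕ∞) + costFrom ρ (n + k) i := by
  by_cases h : costFrom ρ (n + k) i = ⊤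
  · rw [h, add_top]; exact le_top
  · obtain ⟨c, hc, hmem⟩ := costFrom_attain h
    rw [hc, ← Nat.cast_add]
    have he : n + k + c = n + (k + c) := by omega
    rw [he] at hmem
    exact costFrom_le_of_mem hmem

lemma cost_split {ρ : ℕ → XV V P} {i : P} {m : ℕ} (h : ∀ k, k ≤ m → i ∉ (ρ k).2) :
    cost ρ i = ((m + 1 : ℕ) : ℕ∞) + costFrom ρ (m + 1) i := by
  induction m with
  | zero =>
    rw [cost, costFrom_succ (by simpa using h 0 le_rfl)]
    norm_num
  | succ m ih =>
    rw [ih (fun k hk => h k (by omega)), costFrom_succ (h (m + 1) le_rfl)]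
    push_cast
    ring

lemma cost_congr_agree {ρ ρ' : ℕ → XV V P} {m : ℕ} {i : P}
    (hag : ∀ j, j ≤ m → (ρ j).2 = (ρ' j).2) (hw : ∃ j, j ≤ m ∧ i ∈ (ρ j).2) :
    cost ρ i = cost ρ' i := by
  have key : ∀ (a b : ℕ → XV V P), (∀ j, j ≤ m → (a j).2 = (b j).2) →
      (∃ j, j ≤ m ∧ i ∈ (a j).2) → cost b i ≤ cost a i := by
    intro a b hab hwit
    obtain ⟨j, hj, hji⟩ := hwit
    have hle : cost a i ≤ (m : ℕ∞) :=
      (cost_le_of_mem hji).trans (Nat.cast_le.mpr hj)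
    have hne : cost a i ≠ ⊤ := by
      intro hh
      rw [hh, top_le_iff] at hle
      exact ENat.coe_ne_top m hle
    obtain ⟨c, hc, hcm⟩ := costFrom_attain hne
    have hc' : cost a i = (c : ℕ∞) := hc
    have hcle : c ≤ m := by
      rw [hc', Nat.cast_le] at hle
      exact hle
    have hbm : i ∈ (b c).2 := by
      rw [← hab c hcle]
      simpa using hcm
    calc cost b i ≤ (c : ℕ∞) := cost_le_of_mem hbm
      _ = cost a i := hc'.symm
  obtain ⟨j, hj, hji⟩ := hw
  refine le_antisymm (key ρ' ρ (fun j hj => (hag j hj).symm) ⟨j, hj, ?_⟩)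
    (key ρ ρ' hag ⟨j, hj, hji⟩)
  rw [← hag j hj]; exact hji

/-! ### Auxiliary: histories, listAppendSeq, costAfter -/

lemma xedge_mono {E : V → V → Prop} {F : P → Set V} {a b : XV V P}
    (h : XEdge E F a b) : a.2 ⊆ b.2 := by
  rw [h.2]; exact Set.subset_union_left

lemma las_lt {h : List (XV V P)} {ρ : ℕ → XV V P} {k : ℕ} (hk : k < h.length) :
    listAppendSeq h ρ k = h.get ⟨k, hk⟩ := dif_pos hk

lemma las_ge {h : List (XV V P)} {ρ : ℕ → XV V P} (k : ℕ) :
    listAppendSeq h ρ (h.length + k) = ρ k := by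
  unfold listAppendSeq
  rw [dif_neg (by omega)]
  congr 1
  omega

lemma isHistoryFrom_nil {E : V → V → Prop} {F : P → Set V} {x0 : XV V P} :
    IsHistoryFrom E F x0 [] x0 := ⟨by simp, List.isChain_singleton _⟩

lemma isHistoryFrom_nil_eq {E : V → V → Prop} {F : P → Set V} {x0 v : XV V P}
    (hh : IsHistoryFrom E F x0 [] v) : v = x0 := by
  have := hh.1
  simpa using this

lemma isHistoryFrom_step {E : V → V → Prop} {F : P → Set V} {x0 v w : XV V P}
    {h : List (XV V P)} (hh : IsHistoryFrom E F x0 h v) (he : XEdge E F v w) :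
    IsHistoryFrom E F x0 (h ++ [v]) w := by
  obtain ⟨h1, h2⟩ := hh
  constructor
  · rcases h with _ | ⟨a, t⟩ <;> simpa using h1
  · rw [List.Chain', List.isChain_append]
    refine ⟨h2, List.isChain_singleton _, ?_⟩
    intro x hx y hy
    rw [List.getLast?_concat, Option.mem_def, Option.some.injEq] at hx
    simp only [List.head?_cons, Option.mem_def, Option.some.injEq] at hy
    subst hx; subst hy
    exact he

lemma isHistoryFrom_snoc {E : V → V → Prop} {F : P → Set V} {x0 u v : XV V P}
    {h : List (XV V P)} (hh : IsHistoryFrom E F x0 (h ++ [u]) v) :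
    IsHistoryFrom E F x0 h u ∧ XEdge E F u v := by
  obtain ⟨h1, h2⟩ := hh
  rw [List.append_assoc, List.Chain', List.isChain_append] at h2
  obtain ⟨hc1, hc2, hc3⟩ := h2
  have hedge : XEdge E F u v := (List.isChain_cons_cons.mp hc2).1
  refine ⟨⟨?_, ?_⟩, hedge⟩
  · rcases h with _ | ⟨a, t⟩ <;> simpa using h1
  · rw [List.Chain', List.isChain_append]
    refine ⟨hc1, List.isChain_singleton _, ?_⟩
    intro x hx y hy
    simp only [List.head?_cons, Option.mem_def, Option.some.injEq] at hy
    subst hy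
    exact hc3 x hx u (by simp)

lemma las_edges {E : V → V → Prop} {F : P → Set V} {x0 v : XV V P}
    {h : List (XV V P)} {ρ : ℕ → XV V P}
    (hh : IsHistoryFrom E F x0 h v) (h0 : ρ 0 = v)
    (he : ∀ n, XEdge E F (ρ n) (ρ (n + 1))) :
    ∀ k, XEdge E F (listAppendSeq h ρ k) (listAppendSeq h ρ (k + 1)) := by
  have hchain := hh.2
  have hget : ∀ (m : ℕ) (hm : m ≤ h.length),
      listAppendSeq h ρ m = (h ++ [v]).get ⟨m, by simp; omega⟩ := by
    intro m hm
    rcases Nat.lt_or_ge m h.length with hlt | hge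
    · rw [las_lt hlt]
      simp [List.getElem_append_left hlt]
    · have hme : m = h.length := by omega
      subst hme
      have h1 : listAppendSeq h ρ (h.length + 0) = ρ 0 := las_ge 0
      rw [Nat.add_zero] at h1
      rw [h1, h0]
      have hv' : (h ++ [v]).get ⟨h.length, by simp⟩ = v := by
        simp [List.get_eq_getElem]
      rw [hv']
  intro k
  rcases Nat.lt_or_ge k h.length with hlt | hge
  · -- within h ++ [v]
    have hc := List.isChain_iff_getElem.mp hchain k (by simp; omega)
    rw [hget k (by omega), hget (k + 1) (by omega)]
    exact hc
  · obtain ⟨k', rfl⟩ : ∃ k', k = h.length + k' := ⟨k - h.length, by omega⟩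
    have e1 := las_ge (h := h) (ρ := ρ) k'
    have e2 := las_ge (h := h) (ρ := ρ) (k' + 1)
    rw [show h.length + k' + 1 = h.length + (k' + 1) by omega, e1, e2]
    exact he k'

lemma las_mono {E : V → V → Prop} {F : P → Set V} {x0 v : XV V P}
    {h : List (XV V P)} {ρ : ℕ → XV V P}
    (hh : IsHistoryFrom E F x0 h v) (h0 : ρ 0 = v)
    (he : ∀ n, XEdge E F (ρ n) (ρ (n + 1))) :
    ∀ a b, a ≤ b → (listAppendSeq h ρ a).2 ⊆ (listAppendSeq h ρ b).2 := by
  intro a b hab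
  induction b, hab using Nat.le_induction with
  | base => exact subset_rfl
  | succ b hb ih => exact ih.trans (xedge_mono (las_edges hh h0 he b))

lemma costAfter_eq_cost_las {h : List (XV V P)} {ρ : ℕ → XV V P} {i : P} :
    costAfter h ρ i = cost (listAppendSeq h ρ) i := by
  simp [costAfter, cost, costFrom, Nat.zero_add]

lemma costAfter_eq_add {E : V → V → Prop} {F : P → Set V} {x0 v : XV V P}
    {h : List (XV V P)} {ρ : ℕ → XV V P} {i : P}
    (hh : IsHistoryFrom E F x0 h v) (h0 : ρ 0 = v)
    (he : ∀ n, XEdge E F (ρ n) (ρ (n + 1))) (hi : i ∉ v.2) :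
    costAfter h ρ i = (h.length : ℕ∞) + cost ρ i := by
  have hlasv : listAppendSeq h ρ h.length = v := by
    have h1 : listAppendSeq h ρ (h.length + 0) = ρ 0 := las_ge 0
    rw [Nat.add_zero] at h1
    rw [h1, h0]
  have hnol : ∀ k, k ≤ h.length → i ∉ (listAppendSeq h ρ k).2 := by
    intro k hk hmem
    exact hi (hlasv ▸ las_mono hh h0 he k h.length hk hmem)
  have hset : {k : ℕ | i ∈ (listAppendSeq h ρ k).2}
      = (fun k' => h.length + k') '' {k' : ℕ | i ∈ (ρ k').2} := by
    ext k
    constructor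
    · intro hk
      have hkl : ¬ k ≤ h.length := fun hle => hnol k hle hk
      refine ⟨k - h.length, ?_, by show h.length + (k - h.length) = k; omega⟩
      rw [Set.mem_setOf_eq, ← las_ge (h := h) (ρ := ρ) (k - h.length),
        show h.length + (k - h.length) = k by omega]
      exact hk
    · rintro ⟨k', hk', rfl⟩
      rw [Set.mem_setOf_eq, las_ge]
      exact hk'
  have himg : (fun k : ℕ => (k : ℕ∞)) '' ((fun k' => h.length + k') '' {k' : ℕ | i ∈ (ρ k').2})
      = (fun x => (h.length : ℕ∞) + x) '' ((fun k : ℕ => (k : ℕ∞)) '' {k' : ℕ | i ∈ (ρ k').2}) := by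
    ext b
    constructor
    · rintro ⟨_, ⟨k', hk', rfl⟩, rfl⟩
      exact ⟨k', ⟨k', hk', rfl⟩, by push_cast; ring⟩
    · rintro ⟨_, ⟨k', hk', rfl⟩, rfl⟩
      exact ⟨h.length + k', ⟨k', hk', rfl⟩, by push_cast; ring⟩
  rw [costAfter, hset, himg, ← aux_enat_add_sInf, ← cost_def']

lemma costAfter_congr {E : V → V → Prop} {F : P → Set V} {x0 v : XV V P}
    {h : List (XV V P)} {ρ ρ' : ℕ → XV V P} {i : P}
    (hh : IsHistoryFrom E F x0 h v) (h0 : ρ 0 = v) (h0' : ρ' 0 = v) (hi : i ∈ v.2) :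
    costAfter h ρ i = costAfter h ρ' i := by
  rw [costAfter_eq_cost_las, costAfter_eq_cost_las]
  have hlv : listAppendSeq h ρ h.length = v := by
    have h1 : listAppendSeq h ρ (h.length + 0) = ρ 0 := las_ge 0
    rw [Nat.add_zero] at h1; rw [h1, h0]
  have hlv' : listAppendSeq h ρ' h.length = v := by
    have h1 : listAppendSeq h ρ' (h.length + 0) = ρ' 0 := las_ge 0
    rw [Nat.add_zero] at h1; rw [h1, h0']
  apply cost_congr_agree (m := h.length)
  · intro j hj
    rcases Nat.lt_or_ge j h.length with hlt | hge
    · rw [las_lt hlt, las_lt hlt]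
    · have : j = h.length := by omega
      subst this
      rw [hlv, hlv']
  · exact ⟨h.length, le_rfl, by rw [hlv]; exact hi⟩

/-! ### Auxiliary: outcome lemmas -/

/-- The history built by following `σ` for `n` steps from `(h, v)`. -/
def histTo (σ : List (XV V P) → XV V P → XV V P) (h : List (XV V P)) (v : XV V P)
    (n : ℕ) : List (XV V P) :=
  h ++ List.ofFn (fun j : Fin n => outcome σ h v j)

lemma histTo_zero {σ : List (XV V P) → XV V P → XV V P} {h : List (XV V P)} {v : XV V P} :
    histTo σ h v 0 = h := by
  simp [histTo]

lemma histTo_succ {σ : List (XV V P) → XV V P → XV V P} {h : List (XV V P)} {v : XV V P}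
    {n : ℕ} : histTo σ h v (n + 1) = histTo σ h v n ++ [outcome σ h v n] := by
  have h1 : (List.ofFn fun j : Fin (n + 1) => outcome σ h v j)
      = (List.ofFn fun j : Fin n => outcome σ h v j) ++ [outcome σ h v n] := by
    rw [List.ofFn_succ', List.concat_eq_append]
    congr 1
  rw [histTo, histTo, h1, List.append_assoc]

lemma histTo_length {σ : List (XV V P) → XV V P → XV V P} {h : List (XV V P)} {v : XV V P}
    {n : ℕ} : (histTo σ h v n).length = h.length + n := by
  simp [histTo]

lemma histTo_shift {σ : List (XV V P) → XV V P → XV V P} {h : List (XV V P)} {v : XV V P}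
    {n : ℕ} : histTo σ (h ++ [v]) (σ h v) n = histTo σ h v (n + 1) := by
  rw [histTo, histTo, List.ofFn_succ]
  simp only [List.append_assoc, List.singleton_append]
  rfl

lemma outcome_shift {σ : List (XV V P) → XV V P → XV V P} (h : List (XV V P)) (v : XV V P)
    (n m : ℕ) :
    outcome σ h v (n + m) = outcome σ (histTo σ h v n) (outcome σ h v n) m := by
  induction n generalizing h v m with
  | zero =>
    rw [Nat.zero_add, histTo_zero]
    rfl
  | succ n ih =>
    have e : n + 1 + m = (n + m) + 1 := by omega
    rw [e]
    show outcome σ (h ++ [v]) (σ h v) (n + m) = _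
    rw [ih (h ++ [v]) (σ h v) m, histTo_shift]
    rfl

lemma outcome_succ_eq {σ : List (XV V P) → XV V P → XV V P} {h : List (XV V P)} {v : XV V P}
    (n : ℕ) :
    outcome σ h v (n + 1) = σ (histTo σ h v n) (outcome σ h v n) := by
  rw [outcome_shift h v n 1]
  rfl

lemma outcome_valid {E : V → V → Prop} {F : P → Set V}
    {σ : List (XV V P) → XV V P → XV V P} (hσ : StratValid E F σ)
    {h : List (XV V P)} {v : XV V P} (n : ℕ) :
    XEdge E F (outcome σ h v n) (outcome σ h v (n + 1)) := by
  rw [outcome_succ_eq]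
  exact hσ _ _

lemma outcome_isPlay {E : V → V → Prop} {F : P → Set V}
    {σ : List (XV V P) → XV V P → XV V P} (hσ : StratValid E F σ)
    {h : List (XV V P)} {v : XV V P} :
    IsPlay E F v (outcome σ h v) :=
  ⟨rfl, fun n => outcome_valid hσ n⟩

lemma histTo_isHistory {E : V → V → Prop} {F : P → Set V} {x0 : XV V P}
    {σ : List (XV V P) → XV V P → XV V P} (hσ : StratValid E F σ)
    {h : List (XV V P)} {v : XV V P} (hh : IsHistoryFrom E F x0 h v) (n : ℕ) :
    IsHistoryFrom E F x0 (histTo σ h v n) (outcome σ h v n) := by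
  induction n with
  | zero => rw [histTo_zero]; exact hh
  | succ n ih =>
    rw [histTo_succ, outcome_succ_eq]
    exact isHistoryFrom_step ih (hσ _ _)

lemma outcome_agree {σ σ' : List (XV V P) → XV V P → XV V P} {h : List (XV V P)}
    {v : XV V P} {n : ℕ}
    (hag : ∀ j, j < n → σ' (histTo σ h v j) (outcome σ h v j)
      = σ (histTo σ h v j) (outcome σ h v j)) :
    ∀ m, m ≤ n → outcome σ' h v m = outcome σ h v m ∧ histTo σ' h v m = histTo σ h v m := by
  intro m hm
  induction m with
  | zero => exact ⟨rfl, by rw [histTo_zero, histTo_zero]⟩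
  | succ m ih =>
    obtain ⟨ho, hhi⟩ := ih (by omega)
    constructor
    · rw [outcome_succ_eq, outcome_succ_eq, ho, hhi, hag m (by omega)]
    · rw [histTo_succ, histTo_succ, ho, hhi]

/-! ### SPE outcomes are λ-consistent -/

lemma cost_eq {ρ : ℕ → XV V P} {i : P} : cost ρ i = costFrom ρ 0 i := rfl

lemma head_to_consistent {E : V → V → Prop} {F : P → Set V} {own : V → P} {x0 : XV V P}
    {σ : List (XV V P) → XV V P → XV V P} (hσ : StratValid E F σ)
    {L : XV V P → ℕ∞}
    (Hd : ∀ h v, IsHistoryFrom E F x0 h v → cost (outcome σ h v) (own v.1) ≤ L v)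
    {h : List (XV V P)} {v : XV V P} (hh : IsHistoryFrom E F x0 h v) :
    Consistent own L (outcome σ h v) := by
  intro n
  have e : costFrom (outcome σ h v) n (own ((outcome σ h v) n).1)
      = cost (outcome σ (histTo σ h v n) (outcome σ h v n)) (own ((outcome σ h v) n).1) := by
    rw [costFrom_shift]
    congr 1
    funext k
    exact outcome_shift h v n k
  rw [e]
  exact Hd _ _ (histTo_isHistory hσ hh n)

lemma spe_consistent {E : V → V → Prop} {F : P → Set V} {own : V → P} {x0 : XV V P}
    {σ : List (XV V P) → XV V P → XV V P} (hσ : IsSPE E F own x0 σ)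
    (lam : ℕ → XV V P → ℕ∞) (h0 : lam 0 = lam0 own)
    (hstep : ∀ k w, lam (k + 1) w = lam k w ∨ lam (k + 1) w = update E F own (lam k) w) :
    ∀ k h v, IsHistoryFrom E F x0 h v → Consistent own (lam k) (outcome σ h v) := by
  obtain ⟨hval, hspe⟩ := hσ
  suffices Hd : ∀ k h v, IsHistoryFrom E F x0 h v →
      cost (outcome σ h v) (own v.1) ≤ lam k v by
    intro k h v hh
    exact head_to_consistent hval (Hd k) hh
  intro k
  induction k with
  | zero =>
    intro h v hh
    rw [h0]
    unfold lam0
    by_cases hv : own v.1 ∈ v.2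
    · rw [if_pos hv]
      exact le_of_eq (costFrom_eq_zero hv)
    · rw [if_neg hv]; exact le_top
  | succ k ih =>
    intro h v hh
    rcases hstep k v with heq | heq
    · rw [heq]; exact ih h v hh
    · rw [heq]
      unfold update
      by_cases hv : own v.1 ∈ v.2
      · rw [if_pos hv]
        exact le_of_eq (costFrom_eq_zero hv)
      · rw [if_neg hv]
        apply le_iInf₂
        intro w hw
        set τ : List (XV V P) → XV V P → XV V P :=
          fun h' v' => if h' = h ∧ v' = v then w else σ h' v' with hτdef
        have hτval : StratValid E F τ := by
          intro h' v'
          rw [hτdef]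
          dsimp only
          split
          next hc => exact hc.2 ▸ hw
          next => exact hval h' v'
        have hτw : τ h v = w := by rw [hτdef]; exact if_pos ⟨rfl, rfl⟩
        have hdev : Deviation own σ τ (own v.1) := by
          intro h' v' hne
          rw [hτdef]
          dsimp only
          rw [if_neg]
          rintro ⟨-, rfl⟩
          exact hne rfl
        have hspeI := hspe h v hh (own v.1) τ hτval hdev
        rw [costAfter_eq_add hh rfl (fun n => outcome_valid hval n) hv,
            costAfter_eq_add hh rfl (fun n => outcome_valid hτval n) hv] at hspeI
        have hcc := (aux_enat_add_le_left (ENat.coe_ne_top h.length)).mp hspeI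
        have htail : ∀ m, outcome τ (h ++ [v]) w m = outcome σ (h ++ [v]) w m := by
          intro m
          refine (outcome_agree (σ := σ) (σ' := τ) (n := m) ?_ m le_rfl).1
          intro j hj
          rw [hτdef]
          dsimp only
          rw [if_neg]
          rintro ⟨hh', -⟩
          have hlen := congrArg List.length hh'
          rw [histTo_length, List.length_append, List.length_singleton] at hlen
          omega
        have hτ1 : outcome τ h v 1 = w := hτw
        have hτco : cost (outcome τ h v) (own v.1)
            = 1 + cost (outcome σ (h ++ [v]) w) (own v.1) := by
          rw [cost_eq, costFrom_succ (show own v.1 ∉ ((outcome τ h v) 0).2 from hv)]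
          congr 1
          rw [costFrom_shift]
          congr 1
          funext m
          have e1 : outcome τ h v (1 + m) = outcome τ (histTo τ h v 1) (outcome τ h v 1) m :=
            outcome_shift h v 1 m
          rw [e1, show histTo τ h v 1 = h ++ [v] by rw [histTo_succ, histTo_zero]; rfl, hτ1]
          exact htail m
        have hmem : outcome σ (h ++ [v]) w ∈ Lam E F own (lam k) w :=
          ⟨outcome_isPlay hval, head_to_consistent hval ih (isHistoryFrom_step hh hw)⟩
        have hle : cost (outcome σ (h ++ [v]) w) (own v.1)
            ≤ sSup ((fun ρ => cost ρ (own v.1)) '' Lam E F own (lam k) w) :=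
          le_sSup ⟨_, hmem, rfl⟩
        calc cost (outcome σ h v) (own v.1)
            ≤ cost (outcome τ h v) (own v.1) := hcc
          _ = 1 + cost (outcome σ (h ++ [v]) w) (own v.1) := hτco
          _ ≤ 1 + sSup ((fun ρ => cost ρ (own v.1)) '' Lam E F own (lam k) w) :=
              add_le_add_right hle 1

/-! ### Finite-horizon backward induction -/

lemma exists_xedge {E : V → V → Prop} {F : P → Set V} (htot : ∀ u : V, ∃ w, E u w)
    (v : XV V P) : ∃ w, XEdge E F v w := by
  obtain ⟨w1, hw⟩ := htot v.1
  exact ⟨(w1, v.2 ∪ {i | w1 ∈ F i}), hw, rfl⟩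

lemma exists_argmin [Fintype V] [Fintype P] (E : V → V → Prop) (F : P → Set V)
    (htot : ∀ u : V, ∃ w, E u w) (f : XV V P → ℕ∞) (v : XV V P) :
    ∃ w, XEdge E F v w ∧ ∀ w', XEdge E F v w' → f w ≤ f w' := by
  obtain ⟨w0, hw0⟩ := exists_xedge (F := F) htot v
  obtain ⟨w, hw, hmin⟩ := Set.exists_min_image {w : XV V P | XEdge E F v w} f
    (Set.toFinite _) ⟨w0, hw0⟩
  exact ⟨w, hw, fun w' hw' => hmin w' hw'⟩

/-- Backward-induction values with a finite budget. -/
noncomputable def BIval [Fintype V] [Fintype P] (E : V → V → Prop) (F : P → Set V)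
    (own : V → P) (htot : ∀ u : V, ∃ w, E u w) : ℕ → XV V P → P → ℕ∞
  | 0 => fun _ _ => ⊤
  | (b + 1) => fun v i =>
      if i ∈ v.2 then 0
      else 1 + BIval E F own htot b
        (Classical.choose
          (exists_argmin E F htot (fun w => BIval E F own htot b w (own v.1)) v)) i

/-- Backward-induction optimal moves. -/
noncomputable def BImove [Fintype V] [Fintype P] (E : V → V → Prop) (F : P → Set V)
    (own : V → P) (htot : ∀ u : V, ∃ w, E u w) (b : ℕ) (v : XV V P) : XV V P :=
  Classical.choose (exists_argmin E F htot (fun w => BIval E F own htot b w (own v.1)) v)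

section BI

variable [Fintype V] [Fintype P] (E : V → V → Prop) (F : P → Set V) (own : V → P)
  (htot : ∀ u : V, ∃ w, E u w)

lemma BImove_edge (b : ℕ) (v : XV V P) : XEdge E F v (BImove E F own htot b v) :=
  (Classical.choose_spec
    (exists_argmin E F htot (fun w => BIval E F own htot b w (own v.1)) v)).1

lemma BImove_min (b : ℕ) (v : XV V P) :
    ∀ w, XEdge E F v w →
      BIval E F own htot b (BImove E F own htot b v) (own v.1) ≤ BIval E F own htot b w (own v.1) :=
  (Classical.choose_spec
    (exists_argmin E F htot (fun w => BIval E F own htot b w (own v.1)) v)).2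

lemma BIval_succ (b : ℕ) (v : XV V P) (i : P) :
    BIval E F own htot (b + 1) v i
      = if i ∈ v.2 then 0 else 1 + BIval E F own htot b (BImove E F own htot b v) i := rfl

end BI

/-- The play following the backward-induction moves with a given budget. -/
noncomputable def qp [Fintype V] [Fintype P] (E : V → V → Prop) (F : P → Set V)
    (own : V → P) (htot : ∀ u : V, ∃ w, E u w) : ℕ → XV V P → ℕ → XV V P
  | _, v, 0 => v
  | b, v, (n + 1) => qp E F own htot (b - 1) (BImove E F own htot (b - 1) v) n

section BI

variable [Fintype V] [Fintype P] (E : V → V → Prop) (F : P → Set V) (own : V → P)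
  (htot : ∀ u : V, ∃ w, E u w)

lemma qp_zero (b : ℕ) (v : XV V P) : qp E F own htot b v 0 = v := rfl

lemma qp_succ (b : ℕ) (v : XV V P) (n : ℕ) :
    qp E F own htot b v (n + 1)
      = qp E F own htot (b - 1) (BImove E F own htot (b - 1) v) n := rfl

lemma qp_edges (n : ℕ) : ∀ (b : ℕ) (v : XV V P),
    XEdge E F (qp E F own htot b v n) (qp E F own htot b v (n + 1)) := by
  induction n with
  | zero => intro b v; exact BImove_edge E F own htot (b - 1) v
  | succ n ih =>
    intro n' v
    rw [qp_succ, qp_succ]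
    exact ih (n' - 1) _

end BI

/-- Truncated cost: hitting time when it is `< r`, and `⊤` otherwise. -/
noncomputable def tc (r : ℕ) (ρ : ℕ → XV V P) (i : P) : ℕ∞ :=
  sInf ((fun k : ℕ => (k : ℕ∞)) '' {k | k < r ∧ i ∈ (ρ k).2})

lemma tc_zero (ρ : ℕ → XV V P) (i : P) : tc 0 ρ i = ⊤ := by
  have hset : {k : ℕ | k < 0 ∧ i ∈ (ρ k).2} = ∅ := by ext k; simp
  rw [tc, hset]
  simp

lemma tc_le_of {ρ : ℕ → XV V P} {i : P} {r k : ℕ} (hk : k < r) (hm : i ∈ (ρ k).2) :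
    tc r ρ i ≤ (k : ℕ∞) :=
  sInf_le ⟨k, ⟨hk, hm⟩, rfl⟩

lemma tc_succ {ρ : ℕ → XV V P} {i : P} {r : ℕ} (h0 : i ∉ (ρ 0).2) :
    tc (r + 1) ρ i = 1 + tc r (fun k => ρ (k + 1)) i := by
  have hset : ((fun k : ℕ => (k : ℕ∞)) '' {k | k < r + 1 ∧ i ∈ (ρ k).2})
      = (fun x => 1 + x) '' ((fun k : ℕ => (k : ℕ∞)) '' {k | k < r ∧ i ∈ (ρ (k + 1)).2}) := by
    ext b
    constructor
    · rintro ⟨k, ⟨hk1, hk2⟩, rfl⟩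
      match k with
      | 0 => exact absurd hk2 h0
      | (k' + 1) =>
        exact ⟨k', ⟨k', ⟨by omega, hk2⟩, rfl⟩, by push_cast; ring⟩
    · rintro ⟨_, ⟨k', ⟨hk1, hk2⟩, rfl⟩, rfl⟩
      exact ⟨k' + 1, ⟨by omega, hk2⟩, by push_cast; ring⟩
  rw [tc, hset, ← aux_enat_add_sInf]
  rfl

lemma tc_eq_zero {ρ : ℕ → XV V P} {i : P} {r : ℕ} (h0 : i ∈ (ρ 0).2) (hr : 0 < r) :
    tc r ρ i = 0 := by
  refine le_antisymm ?_ zero_le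
  simpa using tc_le_of (k := 0) hr h0

lemma le_tc_of_no_hit {ρ : ℕ → XV V P} {i : P} {r d : ℕ} (h : ∀ k, k ≤ d → i ∉ (ρ k).2) :
    ((d + 1 : ℕ) : ℕ∞) ≤ tc r ρ i := by
  apply le_sInf
  rintro b ⟨k, ⟨hk1, hk2⟩, rfl⟩
  have : ¬ k ≤ d := fun hc => h k hc hk2
  exact Nat.cast_le.mpr (by omega)

section BI2

variable [Fintype V] [Fintype P] (E : V → V → Prop) (F : P → Set V) (own : V → P)
  (htot : ∀ u : V, ∃ w, E u w)

lemma BIval_eq_tc : ∀ (b : ℕ) (v : XV V P) (i : P),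
    BIval E F own htot b v i = tc b (qp E F own htot b v) i := by
  intro b
  induction b with
  | zero => intro v i; rw [tc_zero]; rfl
  | succ b ih =>
    intro v i
    by_cases hi : i ∈ v.2
    · rw [BIval_succ, if_pos hi, tc_eq_zero hi (Nat.succ_pos b)]
    · rw [BIval_succ, if_neg hi,
        tc_succ (show i ∉ ((qp E F own htot (b + 1) v) 0).2 from hi)]
      congr 1
      rw [ih]
      congr 1

lemma BIval_le_dev : ∀ (b : ℕ) (v : XV V P) (i : P) (ρ : ℕ → XV V P), ρ 0 = v →
    (∀ n, XEdge E F (ρ n) (ρ (n + 1))) →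
    (∀ n, own (ρ n).1 ≠ i → ρ (n + 1) = BImove E F own htot (b - n - 1) (ρ n)) →
    BIval E F own htot b v i ≤ tc b ρ i := by
  intro b
  induction b with
  | zero => intro v i ρ _ _ _; rw [tc_zero]; exact le_top
  | succ b ih =>
    intro v i ρ h0 he hdev
    by_cases hi : i ∈ v.2
    · rw [BIval_succ, if_pos hi]; exact zero_le
    · rw [BIval_succ, if_neg hi, tc_succ (by rw [h0]; exact hi)]
      refine add_le_add_right ?_ 1
      have h'edges : ∀ n, XEdge E F ((fun k => ρ (k + 1)) n) ((fun k => ρ (k + 1)) (n + 1)) :=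
        fun n => he (n + 1)
      have h'dev : ∀ n, own ((fun k => ρ (k + 1)) n).1 ≠ i →
          (fun k => ρ (k + 1)) (n + 1) = BImove E F own htot (b - n - 1) ((fun k => ρ (k + 1)) n) := by
        intro n hne
        have hd := hdev (n + 1) hne
        rw [show b + 1 - (n + 1) - 1 = b - n - 1 by omega] at hd
        exact hd
      by_cases ho : own v.1 = i
      · have hedge : XEdge E F v (ρ 1) := h0 ▸ he 0
        have hmin := BImove_min E F own htot b v (ρ 1) hedge
        rw [ho] at hmin
        exact hmin.trans (ih (ρ 1) i (fun k => ρ (k + 1)) rfl h'edges h'dev)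
      · have hρ1 : ρ 1 = BImove E F own htot b v := by
          have hd := hdev 0 (by rw [h0]; exact ho)
          rw [show b + 1 - 0 - 1 = b by omega, h0] at hd
          exact hd
        have hih := ih (ρ 1) i (fun k => ρ (k + 1)) rfl h'edges h'dev
        rw [hρ1] at hih
        exact hih

/-- The finite-horizon strategy profile with horizon `N`. -/
noncomputable def sigN (N : ℕ) : List (XV V P) → XV V P → XV V P :=
  fun h v => BImove E F own htot (N - h.length - 1) v

lemma sigN_valid (N : ℕ) : StratValid E F (sigN E F own htot N) :=
  fun h v => BImove_edge E F own htot (N - h.length - 1) v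

lemma out_sigN (N : ℕ) : ∀ (n : ℕ) (h : List (XV V P)) (v : XV V P),
    outcome (sigN E F own htot N) h v n = qp E F own htot (N - h.length) v n := by
  intro n
  induction n with
  | zero => intro h v; rfl
  | succ n ih =>
    intro h v
    have e0 : outcome (sigN E F own htot N) h v (n + 1)
        = outcome (sigN E F own htot N) (h ++ [v]) (sigN E F own htot N h v) n := rfl
    rw [e0, ih, qp_succ]
    have e1 : sigN E F own htot N h v = BImove E F own htot (N - h.length - 1) v := rfl
    have e2 : (h ++ [v]).length = h.length + 1 := by simp
    rw [e1, e2, show N - (h.length + 1) = N - h.length - 1 by omega]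

lemma sigN_tc_spe (N : ℕ) (h : List (XV V P)) (v : XV V P) (i : P)
    (τ : List (XV V P) → XV V P → XV V P) (hτv : StratValid E F τ)
    (hdev : Deviation own (sigN E F own htot N) τ i) :
    tc (N - h.length) (outcome (sigN E F own htot N) h v) i
      ≤ tc (N - h.length) (outcome τ h v) i := by
  have hout : outcome (sigN E F own htot N) h v = qp E F own htot (N - h.length) v :=
    funext (fun n => out_sigN E F own htot N n h v)
  rw [hout, ← BIval_eq_tc]
  apply BIval_le_dev
  · rfl
  · exact fun n => outcome_valid hτv n
  · intro n hne
    rw [outcome_succ_eq, hdev _ _ hne]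
    show BImove E F own htot (N - (histTo τ h v n).length - 1) _ = _
    rw [histTo_length, show N - (h.length + n) - 1 = N - h.length - n - 1 by omega]

end BI2

/-! ### The limit strategy: an SPE of the extended game -/

lemma ufin_exists {α : Type*} [Finite α] (f : ℕ → α) :
    ∃ c, {N | f N = c} ∈ Filter.hyperfilter ℕ := by
  by_contra hc
  push_neg at hc
  have h2 : ∀ c, {N | f N = c}ᶜ ∈ Filter.hyperfilter ℕ :=
    fun c => (Ultrafilter.compl_mem_iff_notMem).mpr (hc c)
  have h3 : (⋂ c, {N | f N = c}ᶜ) ∈ (Filter.hyperfilter ℕ : Filter ℕ) :=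
    Filter.iInter_mem.mpr h2
  have he : (⋂ c, {N | f N = c}ᶜ) = ∅ := by ext N; simp
  rw [he] at h3
  exact Filter.empty_notMem _ h3

/-- Limit along a nonprincipal ultrafilter of a sequence in a finite type. -/
noncomputable def uLim {α : Type*} [Finite α] (f : ℕ → α) : α :=
  Classical.choose (ufin_exists f)

lemma uLim_spec {α : Type*} [Finite α] (f : ℕ → α) :
    {N | f N = uLim f} ∈ Filter.hyperfilter ℕ :=
  Classical.choose_spec (ufin_exists f)

lemma hyper_ge (K : ℕ) : {N | K ≤ N} ∈ Filter.hyperfilter ℕ := by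
  apply Filter.hyperfilter_le_cofinite
  rw [Filter.mem_cofinite]
  exact (Set.finite_lt_nat K).subset (by intro x hx; simpa using hx)

section LIMIT

variable [Fintype V] [Fintype P] (E : V → V → Prop) (F : P → Set V) (own : V → P)
  (htot : ∀ u : V, ∃ w, E u w)

/-- The limit strategy profile. -/
noncomputable def sigInf : List (XV V P) → XV V P → XV V P :=
  fun h v => uLim (fun N => sigN E F own htot N h v)

lemma sigInf_spec (h : List (XV V P)) (v : XV V P) :
    {N | sigN E F own htot N h v = sigInf E F own htot h v} ∈ Filter.hyperfilter ℕ :=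
  uLim_spec _

lemma exists_big_agree (G : Set (List (XV V P) × XV V P)) (hG : G.Finite) (K : ℕ) :
    ∃ N, K ≤ N ∧ ∀ p ∈ G, sigN E F own htot N p.1 p.2 = sigInf E F own htot p.1 p.2 := by
  have h1 : (⋂ p ∈ G, {N | sigN E F own htot N p.1 p.2 = sigInf E F own htot p.1 p.2})
      ∈ (Filter.hyperfilter ℕ : Filter ℕ) :=
    (Filter.biInter_mem hG).mpr (fun p _ => sigInf_spec E F own htot p.1 p.2)
  have h3 := Filter.inter_mem (hyper_ge K) h1
  obtain ⟨N, hN⟩ := Filter.nonempty_of_mem h3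
  exact ⟨N, hN.1, fun p hp => Set.mem_iInter₂.mp hN.2 p hp⟩

lemma sigInf_valid : StratValid E F (sigInf E F own htot) := by
  intro h v
  obtain ⟨N, hN⟩ := Filter.nonempty_of_mem (sigInf_spec E F own htot h v)
  rw [← hN]
  exact sigN_valid E F own htot N h v

theorem sigInf_SPE (x0 : XV V P) : IsSPE E F own x0 (sigInf E F own htot) := by
  refine ⟨sigInf_valid E F own htot, ?_⟩
  intro h v hh i τ hτv hdev
  by_cases hiv : i ∈ v.2
  · exact le_of_eq (costAfter_congr hh rfl rfl hiv)
  · rw [costAfter_eq_add hh rfl (fun n => outcome_valid (sigInf_valid E F own htot) n) hiv,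
        costAfter_eq_add hh rfl (fun n => outcome_valid hτv n) hiv,
        aux_enat_add_le_left (ENat.coe_ne_top h.length)]
    set σS := sigInf E F own htot with hσS
    show cost (outcome σS h v) i ≤ cost (outcome τ h v) i
    by_cases hdt : cost (outcome τ h v) i = ⊤
    · rw [hdt]; exact le_top
    obtain ⟨d, hd, hdmem⟩ := costFrom_attain hdt
    have hd' : cost (outcome τ h v) i = (d : ℕ∞) := hd
    rw [hd']
    by_contra hcon
    push_neg at hcon
    have hnohit : ∀ k, k ≤ d → i ∉ ((outcome σS h v) k).2 := by
      intro k hk hmem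
      have h1 : cost (outcome σS h v) i ≤ (k : ℕ∞) := cost_le_of_mem hmem
      exact absurd (h1.trans (Nat.cast_le.mpr hk)) (not_le.mpr hcon)
    set M := d + 1 with hM
    set G : Set (List (XV V P) × XV V P) :=
      ((fun j => (histTo σS h v j, outcome σS h v j)) '' (Set.Iic M)) ∪
      ((fun j => (histTo τ h v j, outcome τ h v j)) '' (Set.Iic M)) with hG
    have hGfin : G.Finite := ((Set.finite_Iic M).image _).union ((Set.finite_Iic M).image _)
    obtain ⟨N, hNK, hNag⟩ := exists_big_agree E F own htot G hGfin (h.length + M + 1)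
    have hag1 : ∀ m, m ≤ M → outcome (sigN E F own htot N) h v m = outcome σS h v m := by
      intro m hm
      refine (outcome_agree (σ := σS) (σ' := sigN E F own htot N) (n := M) ?_ m hm).1
      intro j hj
      exact hNag _ (Set.mem_union_left _ ⟨j, by simp; omega, rfl⟩)
    set τN : List (XV V P) → XV V P → XV V P :=
      fun h' v' => if own v'.1 = i then τ h' v' else sigN E F own htot N h' v' with hτN
    have hτNval : StratValid E F τN := by
      intro h' v'
      rw [hτN]
      dsimp only
      split
      · exact hτv h' v'
      · exact sigN_valid E F own htot N h' v'
    have hτNdev : Deviation own (sigN E F own htot N) τN i := by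
      intro h' v' hne
      rw [hτN]
      dsimp only
      rw [if_neg hne]
    have hag2 : ∀ m, m ≤ M → outcome τN h v m = outcome τ h v m := by
      intro m hm
      refine (outcome_agree (σ := τ) (σ' := τN) (n := M) ?_ m hm).1
      intro j hj
      rw [hτN]
      dsimp only
      by_cases ho : own ((outcome τ h v j)).1 = i
      · rw [if_pos ho]
      · rw [if_neg ho]
        have h1 : τ (histTo τ h v j) (outcome τ h v j) = σS (histTo τ h v j) (outcome τ h v j) :=
          hdev _ _ ho
        have h2 := hNag _ (Set.mem_union_right _ ⟨j, by simp; omega, rfl⟩)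
        rw [h2]
        exact h1.symm
    have hσNno : ∀ k, k ≤ d → i ∉ ((outcome (sigN E F own htot N) h v) k).2 := by
      intro k hk
      rw [hag1 k (by omega)]
      exact hnohit k hk
    have h1 : ((d + 1 : ℕ) : ℕ∞) ≤ tc (N - h.length) (outcome (sigN E F own htot N) h v) i :=
      le_tc_of_no_hit hσNno
    have hτhit : i ∈ ((outcome τ h v) d).2 := by simpa using hdmem
    have hτNhit : i ∈ ((outcome τN h v) d).2 := by
      rw [hag2 d (by omega)]
      exact hτhit
    have h2 : tc (N - h.length) (outcome τN h v) i ≤ (d : ℕ∞) :=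
      tc_le_of (by omega) hτNhit
    have h3 := sigN_tc_spe E F own htot N h v i τN hτNval hτNdev
    have h4 := (h1.trans h3).trans h2
    rw [Nat.cast_le] at h4
    omega

end LIMIT

/-! ### Punishment plays -/

section PUN

variable [Fintype V] [Fintype P] (E : V → V → Prop) (F : P → Set V) (own : V → P)
  (htot : ∀ u : V, ∃ w, E u w)

/-- Punishment play after a deviation from `u` to `w`. -/
noncomputable def pun (μ : XV V P → ℕ∞) (u w : XV V P) : ℕ → XV V P :=
  if hc : ∃ ρ, ρ ∈ Lam E F own μ w ∧ μ u ≤ 1 + cost ρ (own u.1) then Classical.choose hc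
  else qp E F own htot 0 w

lemma pun_isPlay (μ : XV V P → ℕ∞) (u w : XV V P) :
    IsPlay E F w (pun E F own htot μ u w) := by
  unfold pun
  split
  next hc => exact (Classical.choose_spec hc).1.1
  next => exact ⟨qp_zero E F own htot 0 w, fun n => qp_edges E F own htot n 0 w⟩

lemma exists_top_play (μ : XV V P → ℕ∞) (w : XV V P) (i : P)
    (htopS : ∀ c : ℕ, ∃ ρ, ρ ∈ Lam E F own μ w ∧ (c : ℕ∞) < cost ρ i) :
    ∃ ρ, ρ ∈ Lam E F own μ w ∧ cost ρ i = ⊤ := by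
  choose fρ hf1 hf2 using htopS
  set ρS : ℕ → XV V P := fun n => uLim (fun c => fρ c n) with hρS
  have hag : ∀ m : ℕ, {c | ∀ n, n ≤ m → fρ c n = ρS n} ∈ (Filter.hyperfilter ℕ : Filter ℕ) := by
    intro m
    have he : {c | ∀ n, n ≤ m → fρ c n = ρS n} = ⋂ n ∈ Set.Iic m, {c | fρ c n = ρS n} := by
      ext c
      simp only [Set.mem_iInter, Set.mem_setOf_eq, Set.mem_Iic]
    rw [he]
    exact (Filter.biInter_mem (Set.finite_Iic m)).mpr (fun n _ => uLim_spec (fun c => fρ c n))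
  have hgm : ∀ (m K : ℕ), ∃ c, K ≤ c ∧ ∀ n, n ≤ m → fρ c n = ρS n := by
    intro m K
    obtain ⟨c, hc⟩ := Filter.nonempty_of_mem (Filter.inter_mem (hyper_ge K) (hag m))
    exact ⟨c, hc.1, hc.2⟩
  refine ⟨ρS, ⟨⟨?_, ?_⟩, ?_⟩, ?_⟩
  · obtain ⟨c, -, hc⟩ := hgm 0 0
    rw [← hc 0 le_rfl]
    exact (hf1 c).1.1
  · intro n
    obtain ⟨c, -, hc⟩ := hgm (n + 1) 0
    rw [← hc n (by omega), ← hc (n + 1) le_rfl]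
    exact (hf1 c).1.2 n
  · intro n
    rcases eq_or_ne (μ (ρS n)) ⊤ with ht | ht
    · rw [ht]; exact le_top
    obtain ⟨m, hm⟩ := aux_enat_exists_coe ht
    obtain ⟨c, -, hc⟩ := hgm (n + m) 0
    have hcons := (hf1 c).2 n
    rw [hc n (by omega), hm, costFrom_le_coe_iff] at hcons
    rw [hm, costFrom_le_coe_iff]
    obtain ⟨k, hk, hkm⟩ := hcons
    refine ⟨k, hk, ?_⟩
    rw [← hc (n + k) (by omega)]
    exact hkm
  · rw [cost_eq, costFrom_eq_top_iff]
    intro k hk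
    rw [Nat.zero_add] at hk
    obtain ⟨c, hcK, hc⟩ := hgm k k
    have hlt := hf2 c
    have hle : cost (fρ c) i ≤ (k : ℕ∞) := cost_le_of_mem (by rw [hc k le_rfl]; exact hk)
    exact absurd (hle.trans (Nat.cast_le.mpr hcK)) (not_le.mpr hlt)

lemma pun_spec (μ : XV V P → ℕ∞)
    (hfixeq : ∀ w, update E F own μ w = μ w)
    (x0 : XV V P) {h : List (XV V P)} {u w : XV V P}
    (hh : IsHistoryFrom E F x0 h u) (he : XEdge E F u w)
    (hlamcons : ∀ h' v', IsHistoryFrom E F x0 h' v' →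
        Consistent own μ (outcome (sigInf E F own htot) h' v')) :
    pun E F own htot μ u w ∈ Lam E F own μ w
      ∧ μ u ≤ 1 + cost (pun E F own htot μ u w) (own u.1) := by
  suffices hex : ∃ ρ, ρ ∈ Lam E F own μ w ∧ μ u ≤ 1 + cost ρ (own u.1) by
    have hspec := Classical.choose_spec hex
    unfold pun
    rw [dif_pos hex]
    exact hspec
  have hne : (Lam E F own μ w).Nonempty :=
    ⟨outcome (sigInf E F own htot) (h ++ [u]) w,
      outcome_isPlay (sigInf_valid E F own htot),
      hlamcons (h ++ [u]) w (isHistoryFrom_step hh he)⟩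
  set i := own u.1 with hi
  set S := sSup ((fun ρ => cost ρ i) '' Lam E F own μ w) with hS
  have hfix : μ u ≤ 1 + S := by
    conv_lhs => rw [← hfixeq u]
    unfold update
    by_cases hu2 : own u.1 ∈ u.2
    · rw [if_pos hu2]; exact zero_le
    · rw [if_neg hu2]
      exact iInf₂_le w he
  rcases eq_or_ne (μ u) ⊤ with htop | hfin
  · have hStop : ∀ c : ℕ, ∃ ρ, ρ ∈ Lam E F own μ w ∧ (c : ℕ∞) < cost ρ i := by
      intro c
      have h1 : 1 + S = ⊤ := top_le_iff.mp (htop ▸ hfix)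
      have h2 : S = ⊤ := by
        rcases ENat.add_eq_top.mp h1 with h' | h'
        · simp at h'
        · exact h'
      have h3 : (c : ℕ∞) < S := by
        rw [h2]
        exact lt_of_le_of_ne le_top (ENat.coe_ne_top c)
      obtain ⟨b, ⟨ρ, hρ, rfl⟩, hb⟩ := lt_sSup_iff.mp h3
      exact ⟨ρ, hρ, hb⟩
    obtain ⟨ρ, hρ, hcost⟩ := exists_top_play E F own μ w i hStop
    exact ⟨ρ, hρ, by rw [htop, hcost]; simp⟩
  · obtain ⟨m, hm⟩ := aux_enat_exists_coe hfin
    match m, hm with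
    | 0, hm =>
      obtain ⟨ρ, hρ⟩ := hne
      exact ⟨ρ, hρ, by rw [hm]; exact zero_le⟩
    | 1, hm =>
      obtain ⟨ρ, hρ⟩ := hne
      refine ⟨ρ, hρ, ?_⟩
      rw [hm]
      calc ((1 : ℕ) : ℕ∞) = 1 + 0 := by push_cast; ring
        _ ≤ 1 + cost ρ i := add_le_add_right zero_le 1
    | (n + 2), hm =>
      have h1 : ((n + 2 : ℕ) : ℕ∞) ≤ 1 + S := hm ▸ hfix
      have h2 : ((n + 1 : ℕ) : ℕ∞) ≤ S := by
        have e : ((n + 2 : ℕ) : ℕ∞) = 1 + ((n + 1 : ℕ) : ℕ∞) := by push_cast; ring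
        rw [e] at h1
        exact (aux_enat_add_le_left (by simp)).mp h1
      have h3 : ((n : ℕ) : ℕ∞) < S :=
        lt_of_lt_of_le (by exact_mod_cast Nat.lt_succ_self n) h2
      obtain ⟨b, ⟨ρ, hρ, rfl⟩, hb⟩ := lt_sSup_iff.mp h3
      refine ⟨ρ, hρ, ?_⟩
      rw [hm]
      have hb' : ((n : ℕ) : ℕ∞) < cost ρ i := hb
      have h4 : ((n + 1 : ℕ) : ℕ∞) ≤ cost ρ i := by
        rcases eq_or_ne (cost ρ i) ⊤ with hT | hT
        · rw [hT]; exact le_top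
        · obtain ⟨cc, hcc⟩ := aux_enat_exists_coe hT
          rw [hcc] at hb' ⊢
          rw [Nat.cast_lt] at hb'
          exact Nat.cast_le.mpr (by omega)
      calc ((n + 2 : ℕ) : ℕ∞) = 1 + ((n + 1 : ℕ) : ℕ∞) := by push_cast; ring
        _ ≤ 1 + cost ρ i := add_le_add_right h4 1

end PUN

/-! ### The constructed strategy following a consistent play -/

section STAR

variable [Fintype V] [Fintype P] (E : V → V → Prop) (F : P → Set V) (own : V → P)
  (htot : ∀ u : V, ∃ w, E u w) (μ : XV V P → ℕ∞) (x0 : XV V P) (ρ0 : ℕ → XV V P)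

/-- One step of the reference-play tracking automaton. -/
noncomputable def stepSt (st : (ℕ → XV V P) × ℕ) (u : XV V P) : (ℕ → XV V P) × ℕ :=
  if u = st.1 (st.2 + 1) then (st.1, st.2 + 1) else (pun E F own htot μ (st.1 st.2) u, 0)

/-- Tracking automaton on histories. -/
noncomputable def procList : List (XV V P) → (ℕ → XV V P) × ℕ
  | [] => (ρ0, 0)
  | a :: t => List.foldl (stepSt E F own htot μ)
      (if a = x0 then (ρ0, 0) else (qp E F own htot 0 a, 0)) t

/-- The strategy profile built from the consistent play `ρ0` and punishments. -/
noncomputable def sigStar : List (XV V P) → XV V P → XV V P :=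
  fun h v => (procList E F own htot μ x0 ρ0 (h ++ [v])).1
    ((procList E F own htot μ x0 ρ0 (h ++ [v])).2 + 1)

lemma proc_snoc (l : List (XV V P)) (hl : l ≠ []) (u : XV V P) :
    procList E F own htot μ x0 ρ0 (l ++ [u])
      = stepSt E F own htot μ (procList E F own htot μ x0 ρ0 l) u := by
  match l with
  | [] => exact absurd rfl hl
  | a :: t =>
    show List.foldl (stepSt E F own htot μ)
        (if a = x0 then (ρ0, 0) else (qp E F own htot 0 a, 0)) (t ++ [u])
      = stepSt E F own htot μ (List.foldl (stepSt E F own htot μ)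
        (if a = x0 then (ρ0, 0) else (qp E F own htot 0 a, 0)) t) u
    rw [List.foldl_append]
    rfl

lemma pun_start (u w : XV V P) : pun E F own htot μ u w 0 = w :=
  (pun_isPlay E F own htot μ u w).1

lemma pun_edges (u w : XV V P) (n : ℕ) :
    XEdge E F (pun E F own htot μ u w n) (pun E F own htot μ u w (n + 1)) :=
  (pun_isPlay E F own htot μ u w).2 n

lemma proc_cur (hρ0pl : IsPlay E F x0 ρ0) :
    ∀ (l : List (XV V P)) (u : XV V P),
      ((procList E F own htot μ x0 ρ0 (l ++ [u])).1
          (procList E F own htot μ x0 ρ0 (l ++ [u])).2 = u)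
      ∧ (∀ k, XEdge E F ((procList E F own htot μ x0 ρ0 (l ++ [u])).1 k)
          ((procList E F own htot μ x0 ρ0 (l ++ [u])).1 (k + 1))) := by
  intro l
  induction l using List.reverseRecOn with
  | nil =>
    intro u
    have e : procList E F own htot μ x0 ρ0 ([] ++ [u])
        = if u = x0 then (ρ0, 0) else (qp E F own htot 0 u, 0) := rfl
    rw [e]
    split
    next heq =>
      refine ⟨?_, hρ0pl.2⟩
      show ρ0 0 = u
      rw [hρ0pl.1]
      exact heq.symm
    next =>
      exact ⟨qp_zero E F own htot 0 u, fun k => qp_edges E F own htot k 0 u⟩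
  | append_singleton l a ih =>
    intro u
    rw [proc_snoc E F own htot μ x0 ρ0 (l ++ [a]) (by simp) u]
    unfold stepSt
    split
    next heq => exact ⟨heq.symm, (ih a).2⟩
    next hne =>
      exact ⟨pun_start E F own htot μ _ u,
        fun k => pun_edges E F own htot μ _ u k⟩

lemma sigStar_valid (hρ0pl : IsPlay E F x0 ρ0) :
    StratValid E F (sigStar E F own htot μ x0 ρ0) := by
  intro h v
  obtain ⟨hcur, hedges⟩ := proc_cur E F own htot μ x0 ρ0 hρ0pl h v
  have h1 := hedges (procList E F own htot μ x0 ρ0 (h ++ [v])).2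
  rw [hcur] at h1
  exact h1

lemma sigStar_out (hρ0pl : IsPlay E F x0 ρ0) :
    ∀ (m : ℕ) (h : List (XV V P)) (v : XV V P),
    outcome (sigStar E F own htot μ x0 ρ0) h v m
      = (procList E F own htot μ x0 ρ0 (h ++ [v])).1
          ((procList E F own htot μ x0 ρ0 (h ++ [v])).2 + m) := by
  intro m
  induction m with
  | zero =>
    intro h v
    rw [Nat.add_zero]
    exact (proc_cur E F own htot μ x0 ρ0 hρ0pl h v).1.symm
  | succ m ih =>
    intro h v
    show outcome (sigStar E F own htot μ x0 ρ0) (h ++ [v])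
      (sigStar E F own htot μ x0 ρ0 h v) m = _
    rw [ih]
    have hs : procList E F own htot μ x0 ρ0 ((h ++ [v]) ++ [sigStar E F own htot μ x0 ρ0 h v])
        = ((procList E F own htot μ x0 ρ0 (h ++ [v])).1,
           (procList E F own htot μ x0 ρ0 (h ++ [v])).2 + 1) := by
      rw [proc_snoc E F own htot μ x0 ρ0 (h ++ [v]) (by simp) _]
      unfold stepSt
      have hcond : sigStar E F own htot μ x0 ρ0 h v
          = (procList E F own htot μ x0 ρ0 (h ++ [v])).1
              ((procList E F own htot μ x0 ρ0 (h ++ [v])).2 + 1) := rfl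
      rw [if_pos hcond]
    rw [hs]
    show (procList E F own htot μ x0 ρ0 (h ++ [v])).1
        ((procList E F own htot μ x0 ρ0 (h ++ [v])).2 + 1 + m) = _
    have e2 : (procList E F own htot μ x0 ρ0 (h ++ [v])).2 + 1 + m
        = (procList E F own htot μ x0 ρ0 (h ++ [v])).2 + (m + 1) := by omega
    rw [e2]

lemma proc_consistent (hρ0pl : IsPlay E F x0 ρ0) (hρ0cons : Consistent own μ ρ0)
    (hfixeq : ∀ w, update E F own μ w = μ w)
    (hlamcons : ∀ h' v', IsHistoryFrom E F x0 h' v' →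
        Consistent own μ (outcome (sigInf E F own htot) h' v')) :
    ∀ (h : List (XV V P)) (v : XV V P), IsHistoryFrom E F x0 h v →
      Consistent own μ (procList E F own htot μ x0 ρ0 (h ++ [v])).1 := by
  intro h
  induction h using List.reverseRecOn with
  | nil =>
    intro v hh
    have hv := isHistoryFrom_nil_eq hh
    rw [hv]
    have e : procList E F own htot μ x0 ρ0 ([] ++ [x0]) = (ρ0, 0) := by
      show (if x0 = x0 then (ρ0, 0) else (qp E F own htot 0 x0, 0)) = (ρ0, 0)
      rw [if_pos rfl]
    rw [e]
    exact hρ0cons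
  | append_singleton l a ih =>
    intro v hh
    obtain ⟨hh', hedge⟩ := isHistoryFrom_snoc hh
    rw [proc_snoc E F own htot μ x0 ρ0 (l ++ [a]) (by simp) v]
    unfold stepSt
    split
    next heq => exact ih a hh'
    next hne =>
      obtain ⟨hcur, -⟩ := proc_cur E F own htot μ x0 ρ0 hρ0pl l a
      show Consistent own μ (pun E F own htot μ _ v)
      rw [hcur]
      exact (pun_spec E F own htot μ hfixeq x0 hh' hedge hlamcons).1.2

end STAR

/-! ### Optimality of the constructed strategy -/

section FINAL

variable [Fintype V] [Fintype P] (E : V → V → Prop) (F : P → Set V) (own : V → P)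
  (htot : ∀ u : V, ∃ w, E u w) (μ : XV V P → ℕ∞) (x0 : XV V P) (ρ0 : ℕ → XV V P)

lemma sigStar_opt (hρ0pl : IsPlay E F x0 ρ0) (hρ0cons : Consistent own μ ρ0)
    (hfixeq : ∀ w, update E F own μ w = μ w)
    (hlamcons : ∀ h' v', IsHistoryFrom E F x0 h' v' →
        Consistent own μ (outcome (sigInf E F own htot) h' v')) :
    ∀ d : ℕ, ∀ (h : List (XV V P)) (v : XV V P), IsHistoryFrom E F x0 h v →
      ∀ (i : P) (τ : List (XV V P) → XV V P → XV V P), StratValid E F τ →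
      Deviation own (sigStar E F own htot μ x0 ρ0) τ i → i ∉ v.2 →
      cost (outcome τ h v) i = (d : ℕ∞) →
      cost (outcome (sigStar E F own htot μ x0 ρ0) h v) i ≤ (d : ℕ∞) := by
  intro d
  induction d using Nat.strong_induction_on with
  | _ d IH =>
  intro h v hh i τ hτv hdev hiv hcost
  set σs := sigStar E F own htot μ x0 ρ0 with hσs
  set π := (procList E F own htot μ x0 ρ0 (h ++ [v])).1 with hπ
  set n := (procList E F own htot μ x0 ρ0 (h ++ [v])).2 with hn
  have hout : ∀ m, outcome σs h v m = π (n + m) := fun m =>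
    sigStar_out E F own htot μ x0 ρ0 hρ0pl m h v
  set ρτ := outcome τ h v with hρτ
  by_cases hall : ∀ m, ρτ m = π (n + m)
  · have he : outcome σs h v = ρτ := by
      funext m
      rw [hout m, hall m]
    rw [he, hcost]
  · push_neg at hall
    have hex : ∃ m, ρτ m ≠ π (n + m) := hall
    have hm0spec : ρτ (Nat.find hex) ≠ π (n + Nat.find hex) := Nat.find_spec hex
    have hm0min : ∀ j, j < Nat.find hex → ρτ j = π (n + j) := fun j hj =>
      not_not.mp (Nat.find_min hex hj)
    have hm0pos : Nat.find hex ≠ 0 := by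
      intro h0
      apply hm0spec
      rw [h0, Nat.add_zero]
      exact hout 0
    obtain ⟨m, hm⟩ : ∃ m', Nat.find hex = m' + 1 := ⟨Nat.find hex - 1, by omega⟩
    have hagr : ∀ j, j ≤ m → ρτ j = π (n + j) := fun j hj => hm0min j (by omega)
    have hdvg : ρτ (m + 1) ≠ π (n + (m + 1)) := by rw [← hm]; exact hm0spec
    have htrack : ∀ j, j ≤ m →
        procList E F own htot μ x0 ρ0 (histTo τ h v j ++ [ρτ j]) = (π, n + j) := by
      intro j
      induction j with
      | zero =>
        intro _
        rw [histTo_zero]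
        show procList E F own htot μ x0 ρ0 (h ++ [v]) = (π, n + 0)
        rw [Nat.add_zero, hπ, hn]
      | succ j ihj =>
        intro hj
        rw [histTo_succ, proc_snoc E F own htot μ x0 ρ0 _ (by simp) _, ihj (by omega)]
        unfold stepSt
        have hcond : ρτ (j + 1)
            = ((π, n + j) : (ℕ → XV V P) × ℕ).1 (((π, n + j) : (ℕ → XV V P) × ℕ).2 + 1) := by
          show ρτ (j + 1) = π (n + j + 1)
          rw [hagr (j + 1) (by omega)]
          exact congrArg π (by omega)
        rw [if_pos hcond]
        show ((π, n + j + 1) : (ℕ → XV V P) × ℕ) = (π, n + (j + 1))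
        rw [show n + j + 1 = n + (j + 1) by omega]
    have hpresc : σs (histTo τ h v m) (ρτ m) = π (n + m + 1) := by
      show (procList E F own htot μ x0 ρ0 (histTo τ h v m ++ [ρτ m])).1
        ((procList E F own htot μ x0 ρ0 (histTo τ h v m ++ [ρτ m])).2 + 1) = _
      rw [htrack m le_rfl]
    have howner : own (ρτ m).1 = i := by
      by_contra hne
      have hdv := hdev (histTo τ h v m) (ρτ m) hne
      apply hdvg
      have e1 : ρτ (m + 1) = τ (histTo τ h v m) (ρτ m) := outcome_succ_eq m
      rw [e1, hdv, hpresc]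
      exact congrArg π (by omega)
    by_cases hhit : ∃ j, j ≤ m ∧ i ∈ (ρτ j).2
    · have heq : cost (outcome σs h v) i = cost ρτ i := by
        apply cost_congr_agree (m := m)
        · intro j hj
          rw [hout j, hagr j hj]
        · obtain ⟨j, hj, hij⟩ := hhit
          exact ⟨j, hj, by rw [hout j, ← hagr j hj]; exact hij⟩
      rw [heq, hcost]
    · push_neg at hhit
      set u := ρτ m with hu
      have hiu : i ∉ u.2 := hhit m le_rfl
      set w := ρτ (m + 1) with hw
      have hedgeuw : XEdge E F u w := outcome_valid hτv m
      have hne_w : w ≠ π (n + m + 1) := by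
        rw [show n + m + 1 = n + (m + 1) by omega]
        exact hdvg
      have hproc2 : procList E F own htot μ x0 ρ0 (histTo τ h v (m + 1) ++ [w])
          = (pun E F own htot μ u w, 0) := by
        rw [histTo_succ, proc_snoc E F own htot μ x0 ρ0 _ (by simp) _, htrack m le_rfl]
        unfold stepSt
        rw [if_neg hne_w]
        show (pun E F own htot μ (π (n + m)) w, 0) = (pun E F own htot μ u w, 0)
        rw [← hagr m le_rfl]
      have hhist_m : IsHistoryFrom E F x0 (histTo τ h v m) u := histTo_isHistory hτv hh m
      have hhist_m1 : IsHistoryFrom E F x0 (histTo τ h v (m + 1)) w :=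
        histTo_isHistory hτv hh (m + 1)
      obtain ⟨hpunmem, hpuncost⟩ :=
        pun_spec E F own htot μ hfixeq x0 hhist_m hedgeuw hlamcons
      rw [howner] at hpuncost
      have houtw : outcome σs (histTo τ h v (m + 1)) w = pun E F own htot μ u w := by
        funext k
        rw [sigStar_out E F own htot μ x0 ρ0 hρ0pl k _ w, hproc2]
        show pun E F own htot μ u w (0 + k) = pun E F own htot μ u w k
        rw [Nat.zero_add]
      have hsplit : cost ρτ i = ((m + 1 : ℕ) : ℕ∞) + costFrom ρτ (m + 1) i :=
        cost_split (fun k hk => hhit k hk)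
      obtain ⟨d', hd'eq, hdd⟩ : ∃ d' : ℕ, costFrom ρτ (m + 1) i = (d' : ℕ∞)
          ∧ d = (m + 1) + d' := by
        rw [hcost] at hsplit
        have hne : costFrom ρτ (m + 1) i ≠ ⊤ := by
          intro hT
          rw [hT, add_top] at hsplit
          exact ENat.coe_ne_top d hsplit
        obtain ⟨d', hd'⟩ := aux_enat_exists_coe hne
        refine ⟨d', hd', ?_⟩
        rw [hd', ← Nat.cast_add, Nat.cast_inj] at hsplit
        exact hsplit
      have htail : outcome τ (histTo τ h v (m + 1)) w = fun k => ρτ ((m + 1) + k) := by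
        funext k
        exact (outcome_shift h v (m + 1) k).symm
      have hkey : cost (pun E F own htot μ u w) i ≤ (d' : ℕ∞) := by
        by_cases hiw : i ∈ w.2
        · have h0 : cost (pun E F own htot μ u w) i = 0 := by
            rw [cost_eq]
            apply costFrom_eq_zero
            rw [pun_start E F own htot μ u w]
            exact hiw
          rw [h0]
          exact zero_le
        · have hcost' : cost (outcome τ (histTo τ h v (m + 1)) w) i = (d' : ℕ∞) := by
            rw [htail, ← costFrom_shift]
            exact hd'eq
          have hIH := IH d' (by omega) (histTo τ h v (m + 1)) w hhist_m1 i τ hτv hdev hiw hcost'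
          rwa [houtw] at hIH
      have hconsπ : Consistent own μ π :=
        proc_consistent E F own htot μ x0 ρ0 hρ0pl hρ0cons hfixeq hlamcons h v hh
      have hπnm : π (n + m) = u := (hagr m le_rfl).symm
      have hc0 : cost (outcome σs h v) i = costFrom π n i := by
        rw [costFrom_shift]
        congr 1
        funext k
        exact hout k
      have h2 : costFrom π (n + m) (own (π (n + m)).1) ≤ μ (π (n + m)) := hconsπ (n + m)
      rw [hπnm, howner] at h2
      calc cost (outcome σs h v) i = costFrom π n i := hc0
        _ ≤ (m : ℕ∞) + costFrom π (n + m) i := costFrom_tri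
        _ ≤ (m : ℕ∞) + μ u := add_le_add_right h2 _
        _ ≤ (m : ℕ∞) + (1 + cost (pun E F own htot μ u w) i) := add_le_add_right hpuncost _
        _ ≤ (m : ℕ∞) + (1 + (d' : ℕ∞)) := add_le_add_right (add_le_add_right hkey 1) _
        _ = ((d : ℕ) : ℕ∞) := by rw [hdd]; push_cast; ring

lemma sigStar_SPE (hρ0pl : IsPlay E F x0 ρ0) (hρ0cons : Consistent own μ ρ0)
    (hfixeq : ∀ w, update E F own μ w = μ w)
    (hlamcons : ∀ h' v', IsHistoryFrom E F x0 h' v' →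
        Consistent own μ (outcome (sigInf E F own htot) h' v')) :
    IsSPE E F own x0 (sigStar E F own htot μ x0 ρ0) := by
  refine ⟨sigStar_valid E F own htot μ x0 ρ0 hρ0pl, ?_⟩
  intro h v hh i τ hτv hdev
  by_cases hiv : i ∈ v.2
  · exact le_of_eq (costAfter_congr hh rfl rfl hiv)
  · rw [costAfter_eq_add hh rfl
        (fun n => outcome_valid (sigStar_valid E F own htot μ x0 ρ0 hρ0pl) n) hiv,
      costAfter_eq_add hh rfl (fun n => outcome_valid hτv n) hiv,
      aux_enat_add_le_left (ENat.coe_ne_top h.length)]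
    show cost (outcome (sigStar E F own htot μ x0 ρ0) h v) i ≤ cost (outcome τ h v) i
    rcases eq_or_ne (cost (outcome τ h v) i) ⊤ with hT | hT
    · rw [hT]; exact le_top
    · obtain ⟨d, hd⟩ := aux_enat_exists_coe hT
      rw [hd]
      exact sigStar_opt E F own htot μ x0 ρ0 hρ0pl hρ0cons hfixeq hlamcons d h v hh
        i τ hτv hdev hiv hd

end FINAL

/-- characterization: a play `ρ⁰` of the initialized extended game
`(X, x₀)` is the outcome of an SPE if and only if `ρ⁰ ∈ Λ*(x₀)`, where `λ*` is the
fixpoint reached by the labeling iteration started at `λ⁰`. -/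
theorem stmt10 {V P : Type*} [Fintype V] [Fintype P]
    (E : V → V → Prop) (F : P → Set V) (own : V → P) (v0 : V)
    (htot : ∀ u : V, ∃ w, E u w)
    (lam : ℕ → XV V P → ℕ∞) (h0 : lam 0 = lam0 own)
    (hstep : ∀ k w, lam (k + 1) w = lam k w ∨
      lam (k + 1) w = update E F own (lam k) w)
    (kstar : ℕ) (hfixseq : ∀ m, lam (kstar + m) = lam kstar)
    (hfixeq : ∀ w, update E F own (lam kstar) w = lam kstar w)
    (ρ0 : ℕ → XV V P) (hρ0 : IsPlay E F (v0, {i | v0 ∈ F i}) ρ0) :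
    (∃ σ, IsSPE E F own (v0, {i | v0 ∈ F i}) σ ∧
      ∀ n, outcome σ [] (v0, {i | v0 ∈ F i}) n = ρ0 n) ↔
    Consistent own (lam kstar) ρ0 := by
  constructor
  · rintro ⟨σ, hσ, hout⟩
    have hcons := spe_consistent hσ lam h0 hstep kstar [] (v0, {i | v0 ∈ F i}) isHistoryFrom_nil
    have hfun : outcome σ [] (v0, {i | v0 ∈ F i}) = ρ0 := funext hout
    rwa [hfun] at hcons
  · intro hcons
    have hlamcons : ∀ h' v', IsHistoryFrom E F (v0, {i | v0 ∈ F i}) h' v' →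
        Consistent own (lam kstar) (outcome (sigInf E F own htot) h' v') := by
      intro h' v' hh'
      exact spe_consistent (sigInf_SPE E F own htot (v0, {i | v0 ∈ F i})) lam h0 hstep
        kstar h' v' hh'
    refine ⟨sigStar E F own htot (lam kstar) (v0, {i | v0 ∈ F i}) ρ0,
      sigStar_SPE E F own htot (lam kstar) (v0, {i | v0 ∈ F i}) ρ0 hρ0 hcons hfixeq hlamcons, ?_⟩
    intro n
    rw [sigStar_out E F own htot (lam kstar) (v0, {i | v0 ∈ F i}) ρ0 hρ0 n [] _]
    have e : procList E F own htot (lam kstar) (v0, {i | v0 ∈ F i}) ρ0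
        ([] ++ [(v0, {i | v0 ∈ F i})]) = (ρ0, 0) := by
      show (if (v0, {i | v0 ∈ F i}) = (v0, {i | v0 ∈ F i}) then (ρ0, 0)
        else (qp E F own htot 0 (v0, {i | v0 ∈ F i}), 0)) = (ρ0, 0)
      rw [if_pos rfl]
    rw [e]
    show ρ0 (0 + n) = ρ0 n
    rw [Nat.zero_add]

end SPE
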